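/- Let k be a field of characteristic zero, m ≥ 1, and A_m = k[x,y,u,v]/(x^m v − y u − 1). The kernel of the locally nilpotent derivation ∂_m = y ∂/∂x + m x^{m-1} v ∂/∂u on A_m is exactly the subalgebra k[y,v] ⊆ A_m. -/

import Mathlib

open MvPolynomial

set_option synthInstance.maxHeartbeats 1000000
set_option maxHeartbeats 1000000

set_option synthInstance.maxHeartbeats 400000
set_option maxHeartbeats 1000000
set_option linter.dupNamespace false

namespace Stmt5Aux

variable (k : Type) [Field k]



theorem coeff_pderiv {σ : Type*} [DecidableEq σ] (i : σ) (p : MvPolynomial σ k)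
    (t : σ →₀ ℕ) :
    coeff t (pderiv i p) = coeff (t + Finsupp.single i 1) p * ((t i : k) + 1) := by
  induction p using MvPolynomial.induction_on' with
  | monomial s a =>
    rw [pderiv_monomial, coeff_monomial, coeff_monomial]
    by_cases hs : s = t + Finsupp.single i 1
    · have h1 : s - Finsupp.single i 1 = t := by
        rw [hs]; ext j
        simp only [Finsupp.coe_tsub, Pi.sub_apply, Finsupp.add_apply]
        omega
      have h2 : s i = t i + 1 := by
        rw [hs]; simp [Finsupp.add_apply, Finsupp.single_eq_same]
      rw [if_pos h1, if_pos hs, h2]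
      push_cast; ring
    · rw [if_neg hs]
      by_cases h1 : s - Finsupp.single i 1 = t
      · rw [if_pos h1]
        have hsi : s i = 0 := by
          by_contra hne
          apply hs
          rw [← h1, tsub_add_cancel_of_le]
          exact Finsupp.single_le_iff.mpr (Nat.one_le_iff_ne_zero.mpr hne)
        rw [hsi]; simp
      · rw [if_neg h1]; simp
  | add p q hp hq => simp [map_add, coeff_add, hp, hq, add_mul]

theorem not_mem_vars_of_pderiv_eq_zero [CharZero k] {σ : Type*} [DecidableEq σ]
    {i : σ} {p : MvPolynomial σ k} (h : pderiv i p = 0) : i ∉ p.vars := by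
  intro hmem
  rw [mem_vars] at hmem
  obtain ⟨d, hd, hdi⟩ := hmem
  rw [Finsupp.mem_support_iff] at hdi
  have hc := coeff_pderiv (k := k) i p (d - Finsupp.single i 1)
  rw [h, coeff_zero] at hc
  have hle : Finsupp.single i 1 ≤ d :=
    Finsupp.single_le_iff.mpr (Nat.one_le_iff_ne_zero.mpr hdi)
  rw [tsub_add_cancel_of_le hle] at hc
  have h1 : coeff d p ≠ 0 := mem_support_iff.mp hd
  set t0 : σ →₀ ℕ := d - Finsupp.single i 1 with ht0
  have h2 : (t0 i : k) + 1 ≠ 0 := Nat.cast_add_one_ne_zero _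
  exact (mul_ne_zero h1 h2) hc.symm

theorem X_dvd_sub_aeval {σ : Type*} [DecidableEq σ] (i : σ) (p : MvPolynomial σ k) :
    X i ∣ (p - aeval (fun j => if j = i then 0 else X j) p) := by
  induction p using MvPolynomial.induction_on with
  | C a => simp
  | add p q hp hq =>
    have : p + q - aeval (fun j => if j = i then 0 else X j) (p + q)
        = (p - aeval (fun j => if j = i then 0 else X j) p)
          + (q - aeval (fun j => if j = i then 0 else X j) q) := by
      rw [map_add]; ring
    rw [this]; exact dvd_add hp hq
  | mul_X p j hp =>
    rw [map_mul, aeval_X]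
    by_cases hj : j = i
    · subst hj
      rw [if_pos rfl, mul_zero, sub_zero]
      exact Dvd.intro_left p rfl
    · rw [if_neg hj]
      have : p * X j - aeval (fun j => if j = i then 0 else X j) p * X j
          = (p - aeval (fun j => if j = i then 0 else X j) p) * X j := by ring
      rw [this]
      exact Dvd.dvd.mul_right hp (X j)

theorem X_dvd_of_aeval_eq_zero {σ : Type*} [DecidableEq σ] (i : σ) (p : MvPolynomial σ k)
    (h : aeval (fun j => if j = i then 0 else X j) p = (0 : MvPolynomial σ k)) : X i ∣ p := by
  have := X_dvd_sub_aeval (k := k) i p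
  rwa [h, sub_zero] at this



/-- the defining polynomial -/
noncomputable def FF (m : ℕ) : MvPolynomial (Fin 4) k := X 0 ^ m * X 3 - X 1 * X 2 - 1

def f3 : Fin 3 → Fin 4 := ![0, 1, 3]
def f2 : Fin 2 → Fin 4 := ![1, 3]

/-- the map separating out the variable `X 2` -/
noncomputable def chi2 : MvPolynomial (Fin 4) k →ₐ[k] Polynomial (MvPolynomial (Fin 3) k) :=
  aeval ![Polynomial.C (X 0), Polynomial.C (X 1), Polynomial.X, Polynomial.C (X 2)]

theorem chi2_rename (W : MvPolynomial (Fin 3) k) :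
    chi2 k (rename (f3) W) = Polynomial.C W := by
  rw [chi2, aeval_rename]
  have hfun : ((![Polynomial.C (X 0), Polynomial.C (X 1), Polynomial.X, Polynomial.C (X 2)] :
      Fin 4 → Polynomial (MvPolynomial (Fin 3) k)) ∘ f3)
      = fun i => (Polynomial.CAlgHom (R := k)) (X i) := by
    funext j; fin_cases j <;> rfl
  rw [hfun]
  have := congrArg (fun (φ : MvPolynomial (Fin 3) k →ₐ[k] Polynomial (MvPolynomial (Fin 3) k)) => φ W)
    (comp_aeval (f := X) (Polynomial.CAlgHom (R := k)))
  simp only [AlgHom.comp_apply] at this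
  rw [← this, aeval_X_left_apply, Polynomial.CAlgHom]
  rfl

theorem chi2_FF (m : ℕ) : chi2 k (FF k m) =
    Polynomial.C (-(X 1 : MvPolynomial (Fin 3) k)) * Polynomial.X
      + Polynomial.C ((X 0 : MvPolynomial (Fin 3) k) ^ m * X 2 - 1) := by
  rw [FF, chi2]
  simp only [map_sub, map_mul, map_pow, map_one, map_neg, aeval_X, Matrix.cons_val_zero,
    Matrix.cons_val_one, Matrix.head_cons, Matrix.cons_val_two, Matrix.tail_cons,
    Matrix.cons_val_three, Matrix.head_fin_const]
  ring

/-- key lemma: `(FF) ∩ k[x,y,v] = 0` -/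
theorem eq_zero_of_rename_eq_mul (m : ℕ) (W : MvPolynomial (Fin 3) k)
    (q : MvPolynomial (Fin 4) k) (h : rename (f3) W = q * FF k m) : W = 0 := by
  have h2 : Polynomial.C W = chi2 k q * chi2 k (FF k m) := by
    rw [← chi2_rename, h, map_mul]
  have hdeg : (chi2 k (FF k m)).degree = 1 := by
    rw [chi2_FF]
    exact Polynomial.degree_linear (neg_ne_zero.mpr (X_ne_zero 1))
  by_cases hq : chi2 k q = 0
  · rw [hq, zero_mul, Polynomial.C_eq_zero] at h2; exact h2
  · exfalso
    have hFne : chi2 k (FF k m) ≠ 0 := by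
      intro h0; rw [h0] at hdeg; simp at hdeg
    have hle : (Polynomial.C W).degree ≤ 0 := Polynomial.degree_C_le
    rw [h2, Polynomial.degree_mul, hdeg] at hle
    have h0 : (0 : WithBot ℕ) ≤ (chi2 k q).degree := Polynomial.zero_le_degree_iff.mpr hq
    have h1 : (0 : WithBot ℕ) + 1 ≤ (chi2 k q).degree + 1 := add_le_add_left h0 1
    rw [zero_add] at h1
    exact absurd (le_trans h1 hle) (by decide)

theorem rename_f3_X0 : rename (f3) (X 0 : MvPolynomial (Fin 3) k) = X 0 := by
  rw [rename_X]; rfl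
theorem rename_f3_X1 : rename (f3) (X 1 : MvPolynomial (Fin 3) k) = X 1 := by
  rw [rename_X]; rfl
theorem rename_f3_X2 : rename (f3) (X 2 : MvPolynomial (Fin 3) k) = X 3 := by
  rw [rename_X]; rfl

/-- Step 1: clearing `u` using powers of `y`. -/
theorem exists_clear_u (m : ℕ) (p : MvPolynomial (Fin 4) k) :
    ∃ (n : ℕ) (P : MvPolynomial (Fin 3) k) (q : MvPolynomial (Fin 4) k),
      X 1 ^ n * p = rename (f3) P + q * FF k m := by
  induction p using MvPolynomial.induction_on with
  | C a =>
    exact ⟨0, C a, 0, by simp [rename_C]⟩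
  | add p r hp hr =>
    obtain ⟨np, Pp, qp, hp⟩ := hp
    obtain ⟨nr, Pr, qr, hr⟩ := hr
    refine ⟨np + nr, X 1 ^ nr * Pp + X 1 ^ np * Pr, X 1 ^ nr * qp + X 1 ^ np * qr, ?_⟩
    rw [map_add, map_mul, map_mul, map_pow, map_pow, rename_f3_X1]
    rw [pow_add]
    linear_combination (X 1 : MvPolynomial (Fin 4) k) ^ nr * hp
      + (X 1 : MvPolynomial (Fin 4) k) ^ np * hr
  | mul_X p j hp =>
    obtain ⟨n, P, q, hp⟩ := hp
    fin_cases j <;>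
      simp only [show (⟨0, by omega⟩ : Fin 4) = 0 from rfl, show (⟨1, by omega⟩ : Fin 4) = 1 from rfl,
        show (⟨2, by omega⟩ : Fin 4) = 2 from rfl, show (⟨3, by omega⟩ : Fin 4) = 3 from rfl]
    · exact ⟨n, P * X 0, q * X 0, by
        rw [map_mul, rename_f3_X0]; linear_combination (X 0 : MvPolynomial (Fin 4) k) * hp⟩
    · exact ⟨n, P * X 1, q * X 1, by
        rw [map_mul, rename_f3_X1]; linear_combination (X 1 : MvPolynomial (Fin 4) k) * hp⟩
    · refine ⟨n + 1, P * (X 0 ^ m * X 2 - 1), q * (X 1 * X 2) - rename (f3) P, ?_⟩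
      rw [map_mul, map_sub, map_mul, map_pow, map_one, rename_f3_X0, rename_f3_X2]
      rw [FF] at hp ⊢
      rw [pow_succ]
      linear_combination (X 1 * X 2 : MvPolynomial (Fin 4) k) * hp
    · exact ⟨n, P * X 2, q * X 3, by
        rw [map_mul, rename_f3_X2]; linear_combination (X 3 : MvPolynomial (Fin 4) k) * hp⟩

/-- setting `y = 0` -/
noncomputable def piY : MvPolynomial (Fin 4) k →ₐ[k] MvPolynomial (Fin 4) k :=
  aeval ![X 0, 0, X 2, X 3]

theorem piY_X1 : piY k (X 1) = 0 := by rw [piY, aeval_X]; rfl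

theorem piY_rename_f2 (G : MvPolynomial (Fin 2) k) :
    piY k (rename (f2) G) = aeval ![0, X 3] G := by
  rw [piY, aeval_rename]
  have hfun : ((![X 0, 0, X 2, X 3] : Fin 4 → MvPolynomial (Fin 4) k) ∘ f2)
      = ![0, X 3] := by funext j; fin_cases j <;> rfl
  rw [hfun]

theorem piY_FF (m : ℕ) : piY k (FF k m) = X 0 ^ m * X 3 - 1 := by
  rw [FF, piY]
  simp only [map_sub, map_mul, map_pow, map_one, aeval_X]
  norm_num [Matrix.cons_val_zero, Matrix.cons_val_one, Matrix.head_cons]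
  rfl

noncomputable def chi0 : MvPolynomial (Fin 4) k ≃ₐ[k] Polynomial (MvPolynomial (Fin 3) k) :=
  MvPolynomial.finSuccEquiv k 3

theorem chi0_X0 : chi0 k (X 0) = Polynomial.X := MvPolynomial.finSuccEquiv_X_zero

theorem chi0_X3 : chi0 k (X 3) = Polynomial.C (X 2) := by
  have h : (3 : Fin 4) = Fin.succ 2 := rfl
  rw [h]
  exact MvPolynomial.finSuccEquiv_X_succ

theorem chi0_aeval (G : MvPolynomial (Fin 2) k) :
    chi0 k (aeval ![0, X 3] G) = Polynomial.C (aeval ![0, X 2] G) := by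
  have h1 := comp_aeval_apply (R := k) (f := (![0, X 3] : Fin 2 → MvPolynomial (Fin 4) k))
    ((chi0 k : MvPolynomial (Fin 4) k →ₐ[k] Polynomial (MvPolynomial (Fin 3) k))) G
  simp only [AlgEquiv.coe_algHom] at h1
  rw [h1]
  have heq : (fun i => (chi0 k) ((![0, X 3] : Fin 2 → MvPolynomial (Fin 4) k) i))
      = (fun i => Polynomial.CAlgHom (R := k) ((![0, X 2] : Fin 2 → MvPolynomial (Fin 3) k) i)) := by
    funext j; fin_cases j
    · show (chi0 k) 0 = Polynomial.CAlgHom (R := k) 0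
      rw [map_zero, map_zero]
    · show (chi0 k) (X 3) = Polynomial.CAlgHom (R := k) (X 2)
      rw [chi0_X3]; rfl
  rw [heq, ← comp_aeval_apply]
  rfl

theorem degree_contradiction (m : ℕ) (hm : 1 ≤ m) (a : Polynomial (MvPolynomial (Fin 3) k))
    (w : MvPolynomial (Fin 3) k)
    (h : Polynomial.C w + a * (Polynomial.X ^ m * Polynomial.C (X 2) - 1) = 0) :
    a = 0 ∧ w = 0 := by
  set b : Polynomial (MvPolynomial (Fin 3) k) :=
    Polynomial.X ^ m * Polynomial.C (X 2) - 1 with hb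
  have hb2 : b = Polynomial.C (X 2) * Polynomial.X ^ m + Polynomial.C (-1) := by
    rw [hb, map_neg, map_one]; ring
  have hdegb : b.degree = m := by
    rw [hb2]
    rw [Polynomial.degree_add_eq_left_of_degree_lt, Polynomial.degree_C_mul_X_pow m (X_ne_zero 2)]
    rw [Polynomial.degree_C_mul_X_pow m (X_ne_zero 2)]
    calc (Polynomial.C (-1 : MvPolynomial (Fin 3) k)).degree ≤ 0 := Polynomial.degree_C_le
    _ < m := by exact_mod_cast hm
  have ha : a = 0 := by
    by_contra hane
    have hbne : b ≠ 0 := by intro h0; rw [h0] at hdegb; simp at hdegb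
    have hCw : Polynomial.C w = -(a * b) := by linear_combination h
    have hle : (a * b).degree ≤ 0 := by
      rw [← Polynomial.degree_neg, ← hCw]; exact Polynomial.degree_C_le
    rw [Polynomial.degree_mul, hdegb] at hle
    have h0 : (0 : WithBot ℕ) ≤ a.degree := Polynomial.zero_le_degree_iff.mpr hane
    have h1 : (m : WithBot ℕ) ≤ a.degree + m := by
      calc (m : WithBot ℕ) = 0 + m := (zero_add _).symm
      _ ≤ a.degree + m := add_le_add_left h0 _
    have : (m : WithBot ℕ) ≤ 0 := le_trans h1 hle
    have : (m : ℕ) ≤ 0 := by exact_mod_cast this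
    omega
  refine ⟨ha, ?_⟩
  rw [ha, zero_mul, add_zero, Polynomial.C_eq_zero] at h
  exact h


theorem saturate (m : ℕ) (hm : 1 ≤ m) :
    ∀ (n : ℕ) (p q : MvPolynomial (Fin 4) k) (G : MvPolynomial (Fin 2) k),
      X 1 ^ n * p = rename (f2) G + q * FF k m →
      ∃ (H : MvPolynomial (Fin 2) k) (r : MvPolynomial (Fin 4) k),
        p = rename (f2) H + r * FF k m := by
  intro n
  induction n with
  | zero =>
    intro p q G h
    exact ⟨G, q, by rw [pow_zero, one_mul] at h; exact h⟩
  | succ n ih =>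
    intro p q G h
    have hpi := congrArg (piY k) h
    rw [map_mul, map_pow, piY_X1, zero_pow (Nat.succ_ne_zero n), zero_mul, map_add, map_mul,
      piY_rename_f2, piY_FF] at hpi
    have hchi := congrArg (chi0 k) hpi.symm
    rw [map_zero, map_add, map_mul, chi0_aeval, map_sub, map_mul, map_pow, map_one,
      chi0_X0, chi0_X3] at hchi
    obtain ⟨ha, hw⟩ := degree_contradiction k m hm (chi0 k (piY k q)) (aeval ![0, X 2] G) hchi
    have hq0 : piY k q = 0 := by
      apply (chi0 k).injective; rw [ha, map_zero]
    have hq1 : (X 1 : MvPolynomial (Fin 4) k) ∣ q := by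
      apply X_dvd_of_aeval_eq_zero (k := k) 1 q
      have hfun : (fun j : Fin 4 => if j = 1 then (0 : MvPolynomial (Fin 4) k) else X j)
          = ![X 0, 0, X 2, X 3] := by funext j; fin_cases j <;> rfl
      rw [hfun]; exact hq0
    have hG0 : aeval (![0, X 1] : Fin 2 → MvPolynomial (Fin 2) k) G = 0 := by
      apply rename_injective (![1, 2] : Fin 2 → Fin 3) (by decide)
      rw [map_zero]
      have h1 := comp_aeval_apply (R := k) (f := (![0, X 1] : Fin 2 → MvPolynomial (Fin 2) k))
        (rename (![1, 2] : Fin 2 → Fin 3)) G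
      rw [h1]
      have hfun : (fun i => rename (![1, 2] : Fin 2 → Fin 3)
          ((![0, X 1] : Fin 2 → MvPolynomial (Fin 2) k) i))
          = (![0, X 2] : Fin 2 → MvPolynomial (Fin 3) k) := by
        funext j; fin_cases j
        · show rename (![1, 2] : Fin 2 → Fin 3) 0 = 0; rw [map_zero]
        · show rename (![1, 2] : Fin 2 → Fin 3) (X 1) = X 2; rw [rename_X]; rfl
      rw [hfun, hw]
    have hG1 : (X 0 : MvPolynomial (Fin 2) k) ∣ G := by
      apply X_dvd_of_aeval_eq_zero (k := k) 0 G
      have hfun : (fun j : Fin 2 => if j = 0 then (0 : MvPolynomial (Fin 2) k) else X j)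
          = ![0, X 1] := by funext j; fin_cases j <;> rfl
      rw [hfun]; exact hG0
    obtain ⟨q₁, hq⟩ := hq1
    obtain ⟨G₁, hG⟩ := hG1
    have hcancel : X 1 ^ n * p = rename (f2) G₁ + q₁ * FF k m := by
      apply mul_left_cancel₀ (X_ne_zero (1 : Fin 4))
      rw [hG, hq, map_mul] at h
      have hrx : rename (f2) (X 0 : MvPolynomial (Fin 2) k) = X 1 := by rw [rename_X]; rfl
      rw [hrx] at h
      calc X 1 * (X 1 ^ n * p) = X 1 ^ (n + 1) * p := by ring
      _ = X 1 * rename (f2) G₁ + X 1 * q₁ * FF k m := by rw [h]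
      _ = X 1 * (rename (f2) G₁ + q₁ * FF k m) := by ring
    exact ih p q₁ G₁ hcancel

noncomputable def DD (m : ℕ) :
    Derivation k (MvPolynomial (Fin 4) k) (MvPolynomial (Fin 4) k) :=
  mkDerivation k ![X 1, 0, (m : MvPolynomial (Fin 4) k) * X 0 ^ (m - 1) * X 3, 0]

theorem DD_apply (m : ℕ) (p : MvPolynomial (Fin 4) k) :
    DD k m p = X 1 * pderiv 0 p
      + ((m : MvPolynomial (Fin 4) k) * X 0 ^ (m - 1) * X 3) * pderiv 2 p := by
  have h : DD k m = (X 1 : MvPolynomial (Fin 4) k) • pderiv (0 : Fin 4)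
      + ((m : MvPolynomial (Fin 4) k) * X 0 ^ (m - 1) * X 3) • pderiv (2 : Fin 4) := by
    apply derivation_ext
    intro i
    rw [DD, mkDerivation_X]
    fin_cases i <;>
      simp [Derivation.add_apply, Derivation.smul_apply, smul_eq_mul]
  rw [h, Derivation.add_apply, Derivation.smul_apply, Derivation.smul_apply,
    smul_eq_mul, smul_eq_mul]

theorem DD_X0 (m : ℕ) : DD k m (X 0) = X 1 := by rw [DD, mkDerivation_X]; rfl
theorem DD_X1 (m : ℕ) : DD k m (X 1) = 0 := by rw [DD, mkDerivation_X]; rfl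
theorem DD_X2 (m : ℕ) :
    DD k m (X 2) = (m : MvPolynomial (Fin 4) k) * X 0 ^ (m - 1) * X 3 := by
  rw [DD, mkDerivation_X]; rfl
theorem DD_X3 (m : ℕ) : DD k m (X 3) = 0 := by rw [DD, mkDerivation_X]; rfl

theorem DD_FF (m : ℕ) (hm : 1 ≤ m) : DD k m (FF k m) = 0 := by
  rw [FF, map_sub, map_sub, Derivation.leibniz, Derivation.leibniz, Derivation.leibniz_pow,
    Derivation.map_one_eq_zero, DD_X0, DD_X1, DD_X2, DD_X3]
  simp only [smul_eq_mul, nsmul_eq_mul, smul_zero, mul_zero, zero_mul, sub_zero]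
  ring

theorem DD_rename (m : ℕ) (P : MvPolynomial (Fin 3) k) :
    DD k m (rename (f3) P) = X 1 * rename (f3) (pderiv 0 P) := by
  have hvars : (2 : Fin 4) ∉ (rename (f3) P).vars := by
    intro hmem
    have h2 := vars_rename (f3) P hmem
    rw [Finset.mem_image] at h2
    obtain ⟨i, _, hi⟩ := h2
    fin_cases i <;> exact absurd hi (by decide)
  have h2 : pderiv 2 (rename (f3) P) = 0 := pderiv_eq_zero_of_notMem_vars hvars
  have h0 : pderiv (0 : Fin 4) (rename (f3) P) = rename (f3) (pderiv 0 P) :=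
    pderiv_rename (f := f3) (by decide) 0 P
  rw [DD_apply, h0, h2, mul_zero, add_zero]

theorem kernel_poly [CharZero k] (m : ℕ) (hm : 1 ≤ m) (p : MvPolynomial (Fin 4) k)
    (h : ∃ q0, DD k m p = q0 * FF k m) :
    ∃ (H : MvPolynomial (Fin 2) k) (r : MvPolynomial (Fin 4) k),
      p = rename (f2) H + r * FF k m := by
  obtain ⟨q0, hq0⟩ := h
  obtain ⟨n, P, q, h1⟩ := exists_clear_u k m p
  have h2 : DD k m (X 1 ^ n * p) = X 1 ^ n * q0 * FF k m := by
    rw [Derivation.leibniz, Derivation.leibniz_pow, DD_X1, smul_zero, smul_zero, smul_zero,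
      add_zero, smul_eq_mul, hq0]
    ring
  have h3 : DD k m (rename (f3) P) = (X 1 ^ n * q0 - DD k m q) * FF k m := by
    have := congrArg (DD k m) h1
    rw [h2, map_add, Derivation.leibniz, DD_FF k m hm, smul_zero, zero_add, smul_eq_mul] at this
    linear_combination -this
  rw [DD_rename] at h3
  have h4 : rename (f3) ((X 1 : MvPolynomial (Fin 3) k) * pderiv 0 P)
      = (X 1 ^ n * q0 - DD k m q) * FF k m := by
    rw [map_mul, rename_f3_X1]; exact h3
  have h5 : (X 1 : MvPolynomial (Fin 3) k) * pderiv 0 P = 0 :=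
    eq_zero_of_rename_eq_mul k m _ _ h4
  have h6 : pderiv (0 : Fin 3) P = 0 := by
    rcases mul_eq_zero.mp h5 with h | h
    · exact absurd h (X_ne_zero 1)
    · exact h
  have h7 : (0 : Fin 3) ∉ P.vars := not_mem_vars_of_pderiv_eq_zero (k := k) h6
  have h8 : (P.vars : Set (Fin 3)) ⊆ Set.range (![1, 2] : Fin 2 → Fin 3) := by
    intro i hi
    fin_cases i
    · exact absurd hi h7
    · exact ⟨0, rfl⟩
    · exact ⟨1, rfl⟩
  obtain ⟨G, hG⟩ := exists_rename_eq_of_vars_subset_range P (![1, 2] : Fin 2 → Fin 3)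
    (by decide) h8
  have h9 : rename (f3) P = rename (f2) G := by
    rw [← hG, rename_rename]
    have : (f3 ∘ (![1, 2] : Fin 2 → Fin 3)) = f2 := by funext j; fin_cases j <;> rfl
    rw [this]
  rw [h9] at h1
  exact saturate k m hm n p q G h1

end Stmt5Aux


/-- The kernel of the locally nilpotent derivation `∂_m = y ∂/∂x + m x^{m-1} v ∂/∂u` on
`A_m = k[x,y,u,v]/(x^m v − y u − 1)` is exactly the subalgebra `k[y,v]`.
Variables: `X 0 = x`, `X 1 = y`, `X 2 = u`, `X 3 = v`. -/
theorem stmt5 (k : Type) [Field k] [CharZero k] (m : ℕ) (hm : 1 ≤ m)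
    (I : Ideal (MvPolynomial (Fin 4) k))
    (hI : I = Ideal.span {(X 0 ^ m * X 3 - X 1 * X 2 - 1 : MvPolynomial (Fin 4) k)})
    (D' : Derivation k (MvPolynomial (Fin 4) k ⧸ I) (MvPolynomial (Fin 4) k ⧸ I))
    (hD' : ∀ p : MvPolynomial (Fin 4) k,
      D' (Ideal.Quotient.mk I p) =
        Ideal.Quotient.mk I
          ((mkDerivation k
            (![X 1, 0, (m : MvPolynomial (Fin 4) k) * X 0 ^ (m - 1) * X 3, 0] :
              Fin 4 → MvPolynomial (Fin 4) k)) p)) :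
    ∀ a, D' a = 0 ↔ a ∈ Algebra.adjoin k
      ({Ideal.Quotient.mk I (X 1 : MvPolynomial (Fin 4) k),
        Ideal.Quotient.mk I (X 3 : MvPolynomial (Fin 4) k)} :
        Set (MvPolynomial (Fin 4) k ⧸ I)) := by
  have hFF : (X 0 ^ m * X 3 - X 1 * X 2 - 1 : MvPolynomial (Fin 4) k) = Stmt5Aux.FF k m := rfl
  have hDD : ∀ r : MvPolynomial (Fin 4) k,
      D' (Ideal.Quotient.mk I r) = Ideal.Quotient.mk I (Stmt5Aux.DD k m r) := fun r => hD' r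
  intro a
  obtain ⟨p, rfl⟩ := Ideal.Quotient.mk_surjective a
  constructor
  · intro h0
    rw [hDD p, Ideal.Quotient.eq_zero_iff_mem, hI, Ideal.mem_span_singleton] at h0
    obtain ⟨c, hc⟩ := h0
    obtain ⟨H, r, hp⟩ := Stmt5Aux.kernel_poly k m hm p ⟨c, by rw [hc, hFF]; ring⟩
    rw [hp, map_add]
    have hz : Ideal.Quotient.mk I (r * Stmt5Aux.FF k m) = 0 := by
      rw [Ideal.Quotient.eq_zero_iff_mem, hI]
      exact Ideal.mem_span_singleton.mpr ⟨r, by rw [hFF]; ring⟩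
    rw [hz, add_zero]
    have hcomp : ((Ideal.Quotient.mkₐ k I).comp (rename (Stmt5Aux.f2)))
        = aeval ![Ideal.Quotient.mk I (X 1), Ideal.Quotient.mk I (X 3)] := by
      apply algHom_ext
      intro i
      fin_cases i <;>
        simp [Ideal.Quotient.mkₐ_eq_mk, Stmt5Aux.f2, rename_X]
    have hval : aeval ![Ideal.Quotient.mk I (X 1), Ideal.Quotient.mk I (X 3)] H
        = Ideal.Quotient.mk I (rename (Stmt5Aux.f2) H) := by
      have := AlgHom.congr_fun hcomp H
      simpa [Ideal.Quotient.mkₐ_eq_mk] using this.symm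
    have hset : ({Ideal.Quotient.mk I (X 1), Ideal.Quotient.mk I (X 3)} :
        Set (MvPolynomial (Fin 4) k ⧸ I))
        = Set.range ![Ideal.Quotient.mk I (X 1), Ideal.Quotient.mk I (X 3)] := by
      ext z
      simp only [Set.mem_insert_iff, Set.mem_singleton_iff, Set.mem_range, Fin.exists_fin_two,
        Matrix.cons_val_zero, Matrix.cons_val_one, Matrix.head_cons, eq_comm]
    rw [hset, Algebra.adjoin_range_eq_range_aeval]
    exact ⟨H, hval⟩
  · intro hmem
    revert hmem
    show _ ∈ _ → _
    generalize Ideal.Quotient.mk I p = x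
    intro hmem
    induction hmem using Algebra.adjoin_induction with
    | mem x hx =>
      simp only [Set.mem_insert_iff, Set.mem_singleton_iff] at hx
      rcases hx with rfl | rfl
      · rw [hDD, Stmt5Aux.DD_X1, map_zero]
      · rw [hDD, Stmt5Aux.DD_X3, map_zero]
    | algebraMap r => exact Derivation.map_algebraMap D' r
    | add x y hx hy ihx ihy => rw [map_add, ihx, ihy, add_zero]
    | mul x y hx hy ihx ihy => rw [Derivation.leibniz, ihx, ihy, smul_zero, smul_zero, add_zero]
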